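/- Let x_0 < 0.649. There exists a constant δ > 0 such that for every function of the form g(x) = 1 + Σ_{k=1}^∞ a_k x^k with coefficients a_k ∈ {−1, 0, 1}, and every x ∈ [0, x_0], if |g(x)| < δ then g'(x) < −δ. -/

import Mathlib

open Set MeasureTheory Filter Topology

noncomputable section

/-- The β-transformation `x ↦ βx mod 1`. -/
def fbeta (β : ℝ) (x : ℝ) : ℝ := Int.fract (β * x)

/-- The digit sequence `d(x, β)`, given by `d(x,β)_n = [β f_β^n(x)]`. -/
def bdigit (β x : ℝ) (n : ℕ) : ℕ := (⌊β * (fbeta β)^[n] x⌋).toNat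

/-- The β-shift `S_β`: the closure (product topology) of the set of digit sequences of
points of `[0,1)`. -/
def betaShift (β : ℝ) : Set (ℕ → ℕ) :=
  closure {d | ∃ x ∈ Set.Ico (0 : ℝ) 1, d = bdigit β x}

/-- `π_β ((i_k)) = ∑ i_k β^{-(k+1)}`. -/
def piBeta (β : ℝ) (d : ℕ → ℕ) : ℝ := ∑' k : ℕ, (d k : ℝ) / β ^ (k + 1)

/-- The finite word `w` occurs in the sequence `d` at position `m`. -/
def occursAt (w : List ℕ) (d : ℕ → ℕ) (m : ℕ) : Prop :=
  ∀ i < w.length, d (m + i) = w.getD i 0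

/-- The finite word `w` occurs somewhere in the sequence `d`. -/
def occursIn (w : List ℕ) (d : ℕ → ℕ) : Prop := ∃ m, occursAt w d m

/-- `w ∈ S_β^*`: the finite word `w` occurs in some sequence of `S_β`. -/
def wordIn (β : ℝ) (w : List ℕ) : Prop := ∃ d ∈ betaShift β, occursIn w d

/-- The finite word `w` occurs in some sequence of the set `S`. -/
def wordInSet (S : Set (ℕ → ℕ)) (w : List ℕ) : Prop := ∃ d ∈ S, occursIn w d

/-- The cylinder `[w]` in `S_β`. -/
def cylinder (β : ℝ) (w : List ℕ) : Set (ℕ → ℕ) :=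
  {d ∈ betaShift β | ∀ i < w.length, d i = w.getD i 0}

/-- A subshift of finite type inside `S_β`: the subset of `S_β` determined by a finite
set of forbidden words. -/
def IsSFTin (β : ℝ) (S : Set (ℕ → ℕ)) : Prop :=
  ∃ F : Finset (List ℕ), S = {d ∈ betaShift β | ∀ w ∈ F, ¬ occursIn w d}

/-- `S_β` is a subshift of finite type iff `d(1,β)` has only finitely many nonzero digits. -/
def betaShiftFiniteType (β : ℝ) : Prop := ∃ N, ∀ n ≥ N, bdigit β 1 n = 0

/-- The length (Lebesgue measure) of a set of reals. -/
def len (I : Set ℝ) : ℝ := (volume I).toReal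

/-- `I` is a (possibly degenerate) closed interval. -/
def IsClosedInterval (I : Set ℝ) : Prop := ∃ a b : ℝ, a ≤ b ∧ I = Set.Icc a b

/-- A legal move in Schmidt's game with ratio `ρ`: a closed subinterval `cur` of `prev`
with `|cur| ≥ ρ|prev|`. -/
def MoveLegal (ρ : ℝ) (prev cur : Set ℝ) : Prop :=
  IsClosedInterval cur ∧ cur ⊆ prev ∧ ρ * len prev ≤ len cur

/-- White has a winning strategy in Schmidt's `(α,γ)`-game on `[0,1]` with target set `E`:
there is a strategy (a function from the history of Black's moves to White's next move)
such that, for every sequence of moves of Black starting with a closed interval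
`B 0 ⊆ [0,1]`, White's moves are legal as long as Black's have been, and if Black always
moves legally then `⋂ k, W k ⊆ E`. -/
def WinsSchmidt (α γ : ℝ) (E : Set ℝ) : Prop :=
  ∃ strat : List (Set ℝ) → Set ℝ,
    ∀ B : ℕ → Set ℝ,
      (IsClosedInterval (B 0) ∧ B 0 ⊆ Set.Icc (0 : ℝ) 1) →
      (∀ n : ℕ,
        (∀ k < n, MoveLegal γ (strat (List.ofFn fun i : Fin (k + 1) => B i)) (B (k + 1))) →
        MoveLegal α (B n) (strat (List.ofFn fun i : Fin (n + 1) => B i))) ∧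
      ((∀ k : ℕ, MoveLegal γ (strat (List.ofFn fun i : Fin (k + 1) => B i)) (B (k + 1))) →
        (⋂ k : ℕ, strat (List.ofFn fun i : Fin (k + 1) => B i)) ⊆ E)

/-- `E` is `α`-winning: it is `(α,γ)`-winning for every `γ ∈ (0,1)`. -/
def AlphaWinning (α : ℝ) (E : Set ℝ) : Prop :=
  ∀ γ ∈ Set.Ioo (0 : ℝ) 1, WinsSchmidt α γ E

/-- A similarity transformation of `ℝ`. -/
def IsSimilarityMap (f : ℝ → ℝ) : Prop := ∃ a b : ℝ, a ≠ 0 ∧ ∀ x, f x = a * x + b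

/-- Falconer's class `𝒢^s`: `G_δ` sets `F` with `dim_H (⋂ i, f_i(F)) ≥ s` for every
sequence of similarity transformations `(f_i)`. -/
def FalconerClass (s : ℝ) (F : Set ℝ) : Prop :=
  IsGδ F ∧ ∀ f : ℕ → ℝ → ℝ, (∀ i, IsSimilarityMap (f i)) →
    ENNReal.ofReal s ≤ dimH (⋂ i, f i '' F)

/-- The suffix of `u` of length `m+1` coincides with the first `m+1` digits of `d(1,β)`. -/
def tailMatch (β : ℝ) (u : List ℕ) (m : ℕ) : Prop :=
  m < u.length ∧ ∀ t ≤ m, u.getD (u.length - 1 - m + t) 0 = bdigit β 1 t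
namespace SolomyakAux

lemma summable_np1 {r : ℝ} (h0 : 0 ≤ r) (h1 : r < 1) :
    Summable (fun n : ℕ => ((n : ℝ) + 1) * r ^ n) := by
  have hn : ‖r‖ < 1 := by rw [Real.norm_eq_abs, abs_of_nonneg h0]; exact h1
  have h1' : Summable (fun n : ℕ => (n : ℝ) ^ 1 * r ^ n) :=
    summable_pow_mul_geometric_of_norm_lt_one 1 hn
  have h2 : Summable (fun n : ℕ => r ^ n) := summable_geometric_of_lt_one h0 h1
  have := h1'.add h2
  refine this.congr fun n => ?_
  simp [pow_one]; ring

lemma hasDeriv (a : ℕ → ℝ) (ha : ∀ k, |a k| ≤ 1) {x : ℝ} (hx0 : 0 ≤ x) (hx1 : x < 0.7) :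
    HasDerivAt (fun t : ℝ => 1 + ∑' k : ℕ, a k * t ^ (k + 1))
      (∑' k : ℕ, a k * (((k : ℝ) + 1) * x ^ k)) x := by
  have key : HasDerivAt (fun t : ℝ => ∑' k : ℕ, a k * t ^ (k + 1))
      (∑' k : ℕ, a k * (((k : ℝ) + 1) * x ^ k)) x := by
    refine hasDerivAt_tsum_of_isPreconnected (𝕜 := ℝ) (F := ℝ)
      (g := fun (n : ℕ) (t : ℝ) => a n * t ^ (n + 1))
      (g' := fun (n : ℕ) (y : ℝ) => a n * (((n : ℝ) + 1) * y ^ n))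
      (u := fun n : ℕ => ((n : ℝ) + 1) * (0.7 : ℝ) ^ n)
      (t := Set.Ioo (-(0.7 : ℝ)) 0.7) (y₀ := 0)
      (summable_np1 (by norm_num) (by norm_num)) isOpen_Ioo
      (convex_Ioo _ _).isPreconnected ?_ ?_ (by constructor <;> norm_num) ?_ ⟨by linarith, hx1⟩
    · intro n y _
      have h := (hasDerivAt_pow (n + 1) y).const_mul (a n)
      convert h using 1
      · rfl
      push_cast
      simp
    · intro n y hy
      have hy7 : |y| ≤ (0.7 : ℝ) := by
        rw [abs_le]; exact ⟨hy.1.le, hy.2.le⟩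
      rw [Real.norm_eq_abs, abs_mul, abs_mul, abs_pow]
      have h1 : |a n| * (|(n : ℝ) + 1| * |y| ^ n) ≤ 1 * (((n : ℝ) + 1) * (0.7 : ℝ) ^ n) := by
        apply mul_le_mul (ha n) _ (by positivity) (by norm_num)
        rw [abs_of_nonneg (by positivity : (0:ℝ) ≤ (n : ℝ) + 1)]
        exact mul_le_mul_of_nonneg_left (pow_le_pow_left₀ (abs_nonneg y) hy7 n) (by positivity)
      linarith
    · refine (summable_zero).congr fun n => ?_
      simp
  simpa using key.const_add 1

end SolomyakAux

set_option maxHeartbeats 1000000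

/-- Solomyak's transversality lemma: for `x₀ < 0.649` there is `δ > 0`
such that for every `g(x) = 1 + ∑ a_k x^k` with coefficients in `{-1,0,1}` and every
`x ∈ [0, x₀]`, if `|g(x)| < δ` then `g'(x) < -δ`. -/
theorem solomyak_transversality (x₀ : ℝ) (hx₀ : x₀ < 0.649) :
    ∃ δ > 0, ∀ a : ℕ → ℝ, (∀ k, a k = -1 ∨ a k = 0 ∨ a k = 1) →
      ∀ x ∈ Set.Icc (0 : ℝ) x₀,
        |1 + ∑' k : ℕ, a k * x ^ (k + 1)| < δ →
          deriv (fun t : ℝ => 1 + ∑' k : ℕ, a k * t ^ (k + 1)) x < -δ := by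
  refine ⟨1/10000, by norm_num, ?_⟩
  intro a ha x hx hg
  obtain ⟨hx0, hxx₀⟩ := hx
  have ha1 : ∀ k, |a k| ≤ 1 := by
    intro k; rcases ha k with h | h | h <;> rw [h] <;> norm_num
  have hx1 : x < 649/1000 := by
    have : x₀ < 649/1000 := by norm_num at hx₀ ⊢; linarith
    linarith
  have hx7 : x < 0.7 := by norm_num; linarith
  have hxlt1 : x < 1 := by linarith
  have h1x : (0:ℝ) < 1 - x := by linarith
  -- rewrite the derivative
  rw [(SolomyakAux.hasDeriv a ha1 hx0 hx7).deriv]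
  set S : ℝ := ∑' k : ℕ, a k * x ^ (k + 1) with hS
  -- summability facts
  have hsgeo : Summable (fun k : ℕ => x ^ k) := summable_geometric_of_lt_one hx0 hxlt1
  have hsKp : Summable (fun k : ℕ => ((k : ℝ) + 1) * x ^ k) := SolomyakAux.summable_np1 hx0 hxlt1
  have hsS : Summable (fun k : ℕ => a k * x ^ (k + 1)) := by
    refine Summable.of_norm_bounded hsgeo fun k => ?_
    rw [Real.norm_eq_abs, abs_mul, abs_pow, abs_of_nonneg hx0]
    have h1 : |a k| * x ^ (k+1) ≤ 1 * x ^ (k+1) :=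
      mul_le_mul_of_nonneg_right (ha1 k) (by positivity)
    have h2 : x ^ (k+1) ≤ x ^ k := by
      rw [pow_succ]
      nlinarith [pow_nonneg hx0 k]
    linarith
  have hsD : Summable (fun k : ℕ => a k * (((k : ℝ) + 1) * x ^ k)) := by
    refine Summable.of_norm_bounded hsKp fun k => ?_
    rw [Real.norm_eq_abs, abs_mul]
    have hp : |((k : ℝ) + 1) * x ^ k| = ((k : ℝ) + 1) * x ^ k := by
      rw [abs_of_nonneg (by positivity)]
    rw [hp]
    have := mul_le_mul_of_nonneg_right (ha1 k) (by positivity : (0:ℝ) ≤ ((k : ℝ) + 1) * x ^ k)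
    linarith
  have tgeo : ∑' k : ℕ, x ^ k = (1 - x)⁻¹ := tsum_geometric_of_lt_one hx0 hxlt1
  have habs : |(x:ℝ)| < 1 := by rw [abs_of_nonneg hx0]; exact hxlt1
  have hsk : Summable (fun k : ℕ => (k : ℝ) * x ^ k) := by
    have := summable_pow_mul_geometric_of_norm_lt_one (R := ℝ) 1
      (by rw [Real.norm_eq_abs]; exact habs)
    simpa [pow_one] using this
  have tKp : ∑' k : ℕ, ((k : ℝ) + 1) * x ^ k = ((1 - x)^2)⁻¹ := by
    have h1 : ∑' k : ℕ, (k : ℝ) * x ^ k = x / (1 - x) ^ 2 :=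
      tsum_coe_mul_geometric_of_norm_lt_one (by rw [Real.norm_eq_abs]; exact habs)
    calc ∑' k : ℕ, ((k : ℝ) + 1) * x ^ k = ∑' k : ℕ, ((k : ℝ) * x ^ k + x ^ k) := by
          apply tsum_congr; intro k; ring
      _ = x / (1 - x) ^ 2 + (1 - x)⁻¹ := by rw [Summable.tsum_add hsk hsgeo, h1, tgeo]
      _ = ((1 - x)^2)⁻¹ := by field_simp; ring
  rcases le_or_gt x (49/100) with hc | hc
  · -- small x : contradiction with |g(x)| small
    exfalso
    have hsshift : Summable (fun k : ℕ => x ^ (k + 1)) := by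
      have := hsgeo.mul_right x
      refine this.congr fun k => ?_
      rw [pow_succ]
    have tshift : ∑' k : ℕ, x ^ (k + 1) = x * (1 - x)⁻¹ := by
      calc ∑' k : ℕ, x ^ (k + 1) = ∑' k : ℕ, x * x ^ k := by
            apply tsum_congr; intro k; ring
        _ = x * (1 - x)⁻¹ := by rw [tsum_mul_left, tgeo]
    have hterm : ∀ k : ℕ, -(x ^ (k + 1)) ≤ a k * x ^ (k + 1) := by
      intro k
      have hak := (abs_le.1 (ha1 k)).1
      nlinarith [pow_nonneg hx0 (k + 1)]
    have hge : -(x * (1 - x)⁻¹) ≤ S := by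
      have := Summable.tsum_le_tsum hterm hsshift.neg hsS
      rwa [tsum_neg, tshift] at this
    have hlt : x * (1 - x)⁻¹ < 9999/10000 := by
      rw [inv_eq_one_div, mul_one_div, div_lt_iff₀ h1x]
      nlinarith
    have := (abs_lt.1 hg).2
    norm_num at this
    linarith
  · -- main case : 49/100 < x
    set lx : ℝ := (154/25) * x with hlx
    have hlx3 : 3 < lx := by rw [hlx]; nlinarith
    have hlx4 : lx < 4 := by rw [hlx]; nlinarith
    set b : ℕ → ℝ := fun k =>
      (((k : ℝ) + 1) - lx) * x ^ k +
        (if k < 3 then 2 * x ^ k * (lx - ((k : ℝ) + 1)) else 0) with hb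
    have hterm : ∀ k : ℕ, a k * (((k : ℝ) + 1) * x ^ k) - (154/25) * (a k * x ^ (k + 1)) ≤ b k := by
      intro k
      have hxk : (0:ℝ) ≤ x ^ k := pow_nonneg hx0 k
      have hak := abs_le.1 (ha1 k)
      have heq : a k * (((k : ℝ) + 1) * x ^ k) - (154/25) * (a k * x ^ (k + 1)) =
          a k * (x ^ k * (((k : ℝ) + 1) - lx)) := by
        rw [hlx]; ring
      rw [heq, hb]
      by_cases h3 : k < 3
      · have hk3 : ((k : ℝ) + 1) ≤ 3 := by
          have : (k : ℝ) ≤ 2 := by exact_mod_cast Nat.lt_succ_iff.mp h3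
          linarith
        have hv : ((k : ℝ) + 1) - lx ≤ 0 := by linarith
        simp only [if_pos h3]
        nlinarith [mul_nonpos_of_nonneg_of_nonpos
          (by linarith : (0:ℝ) ≤ a k + 1)
          (mul_nonpos_of_nonneg_of_nonpos hxk hv)]
      · have hk3 : (4:ℝ) ≤ (k : ℝ) + 1 := by
          have h4 : 3 ≤ k := Nat.le_of_not_lt h3
          have : (3:ℝ) ≤ (k : ℝ) := by exact_mod_cast h4
          linarith
        have hv : (0:ℝ) ≤ ((k : ℝ) + 1) - lx := by linarith
        simp only [if_neg h3, add_zero]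
        nlinarith [mul_nonneg (mul_nonneg
          (by linarith : (0:ℝ) ≤ 1 - a k) hxk) hv]
    have hsb1 : Summable (fun k : ℕ => (((k : ℝ) + 1) - lx) * x ^ k) := by
      have := hsKp.sub (hsgeo.mul_left lx)
      refine this.congr fun k => ?_
      ring
    have hsb2 : Summable (fun k : ℕ =>
        (if k < 3 then 2 * x ^ k * (lx - ((k : ℝ) + 1)) else 0)) := by
      apply summable_of_ne_finset_zero (s := Finset.range 3)
      intro k hk
      rw [Finset.mem_range] at hk
      simp [hk]
    have hsb : Summable b := hsb1.add hsb2
    have tb1 : ∑' k : ℕ, (((k : ℝ) + 1) - lx) * x ^ k = ((1 - x)^2)⁻¹ - lx * (1 - x)⁻¹ := by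
      calc ∑' k : ℕ, (((k : ℝ) + 1) - lx) * x ^ k
          = ∑' k : ℕ, (((k : ℝ) + 1) * x ^ k - lx * x ^ k) := by
            apply tsum_congr; intro k; ring
        _ = ((1 - x)^2)⁻¹ - lx * (1 - x)⁻¹ := by
            rw [Summable.tsum_sub hsKp (hsgeo.mul_left lx), tKp, tsum_mul_left, tgeo]
    have tb2 : ∑' k : ℕ, (if k < 3 then 2 * x ^ k * (lx - ((k : ℝ) + 1)) else 0) =
        2 * (lx - 1) + 2 * x * (lx - 2) + 2 * x^2 * (lx - 3) := by
      rw [tsum_eq_sum (s := Finset.range 3) (by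
        intro k hk
        rw [Finset.mem_range] at hk
        simp [hk])]
      rw [Finset.sum_range_succ, Finset.sum_range_succ, Finset.sum_range_one]
      norm_num
    have htb : ∑' k : ℕ, b k = (((1 - x)^2)⁻¹ - lx * (1 - x)⁻¹) +
        (2 * (lx - 1) + 2 * x * (lx - 2) + 2 * x^2 * (lx - 3)) := by
      rw [hb, Summable.tsum_add hsb1 hsb2, tb1, tb2]
    have hDle : (∑' k : ℕ, a k * (((k : ℝ) + 1) * x ^ k)) - (154/25) * S ≤ ∑' k : ℕ, b k := by
      have h1 : (154/25) * S = ∑' k : ℕ, (154/25) * (a k * x ^ (k + 1)) := by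
        rw [tsum_mul_left]
      rw [h1, ← Summable.tsum_sub hsD (hsS.mul_left _)]
      exact Summable.tsum_le_tsum hterm (hsD.sub (hsS.mul_left _)) hsb
    -- numeric part
    have hS' : S < -(9999/10000) := by
      have := (abs_lt.1 hg).2
      norm_num at this ⊢
      linarith
    have hu2 : ((1 - x)^2)⁻¹ = (1 - x)⁻¹ * (1 - x)⁻¹ := by
      rw [sq, mul_inv]
    have hne : (1 - x) ≠ 0 := ne_of_gt h1x
    -- polynomial inequality
    have hP : 1 - lx * (1 - x) +
        ((2 * (lx - 1) + 2 * x * (lx - 2) + 2 * x^2 * (lx - 3))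
          - ((154/25) * (9999/10000) - 1/10000)) * (1 - x)^2 < 0 := by
      rw [hlx]
      nlinarith [mul_nonneg (by linarith : (0:ℝ) ≤ x - 49/100) (by linarith : (0:ℝ) ≤ 649/1000 - x),
        mul_nonneg (mul_nonneg (by linarith : (0:ℝ) ≤ x - 49/100) (by linarith : (0:ℝ) ≤ 649/1000 - x)) (by linarith : (0:ℝ) ≤ x),
        mul_nonneg (mul_nonneg (by linarith : (0:ℝ) ≤ 649/1000 - x) (by linarith : (0:ℝ) ≤ 649/1000 - x)) (by linarith : (0:ℝ) ≤ x),
        sq_nonneg (x - 649/1000), sq_nonneg (x - 49/100)]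
    have hfrac : (((1 - x)^2)⁻¹ - lx * (1 - x)⁻¹) +
        (2 * (lx - 1) + 2 * x * (lx - 2) + 2 * x^2 * (lx - 3))
        - ((154/25) * (9999/10000) - 1/10000) =
        (1 - lx * (1 - x) +
          ((2 * (lx - 1) + 2 * x * (lx - 2) + 2 * x^2 * (lx - 3))
            - ((154/25) * (9999/10000) - 1/10000)) * (1 - x)^2) * ((1 - x)⁻¹ * (1 - x)⁻¹) := by
      rw [hu2]
      field_simp
      ring
    have hupos : (0:ℝ) < (1 - x)⁻¹ * (1 - x)⁻¹ := by positivity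
    have hT : (((1 - x)^2)⁻¹ - lx * (1 - x)⁻¹) +
        (2 * (lx - 1) + 2 * x * (lx - 2) + 2 * x^2 * (lx - 3)) <
        (154/25) * (9999/10000) - 1/10000 := by
      have := mul_neg_of_neg_of_pos hP hupos
      linarith [hfrac ▸ this]
    have hfinal : (∑' k : ℕ, a k * (((k : ℝ) + 1) * x ^ k)) < -(1/10000) := by
      have h1 : (154/25 : ℝ) * S < (154/25) * (-(9999/10000)) := by
        have := mul_lt_mul_of_pos_left hS' (by norm_num : (0:ℝ) < 154/25)
        linarith
      calc (∑' k : ℕ, a k * (((k : ℝ) + 1) * x ^ k))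
          ≤ (154/25) * S + ∑' k : ℕ, b k := by linarith
        _ < (154/25) * (-(9999/10000)) +
            ((((1 - x)^2)⁻¹ - lx * (1 - x)⁻¹) +
              (2 * (lx - 1) + 2 * x * (lx - 2) + 2 * x^2 * (lx - 3))) := by
            rw [htb]; linarith
        _ < -(1/10000) := by linarith
    convert hfinal using 2
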